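/- Let A be a hyperbolic invertible linear map of ℝ^d with one-dimensional unstable eigenspace E^u spanned by a unit eigenvector v with eigenvalue μ, |μ| > 1. Suppose W ⊆ ℝ^d is a set of pairs (x,y), y ≠ x, such that (y−x)/‖y−x‖ → v uniformly as ‖y−x‖ → ∞ over pairs in W. Then for every n ∈ ℕ and ε > 0 there exists M > 0 such that for all (x,y) ∈ W with ‖x−y‖ > M: (1−ε)|μ|^n ‖y−x‖ ≤ ‖A^n x − A^n y‖ ≤ (1+ε)|μ|^n ‖y−x‖. -/
import Mathlib


/-- Lemma `linalg`: let `A` be a hyperbolic invertible linear map with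
one-dimensional unstable eigenspace spanned by the unit eigenvector `v`, `A v = μ v`,
`|μ| > 1`.  If `W` is a set of pairs of distinct points whose chord directions converge
uniformly to `v` as the distance tends to infinity, then for every `n` and `ε > 0` there is
`M > 0` with `(1-ε)|μ|^n ‖y-x‖ ≤ ‖A^n x - A^n y‖ ≤ (1+ε)|μ|^n ‖y-x‖` whenever
`(x,y) ∈ W` and `‖x-y‖ > M`. -/
theorem stmt_14 (d : ℕ)
    (A : EuclideanSpace ℝ (Fin d) →L[ℝ] EuclideanSpace ℝ (Fin d))
    (hA : Function.Bijective A)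
    (μ : ℝ) (hμ : 1 < |μ|) (v : EuclideanSpace ℝ (Fin d)) (hv : ‖v‖ = 1)
    (heig : A v = μ • v)
    (W : Set (EuclideanSpace ℝ (Fin d) × EuclideanSpace ℝ (Fin d)))
    (hne : ∀ p ∈ W, p.2 ≠ p.1)
    (hconv : ∀ δ : ℝ, 0 < δ → ∃ R : ℝ, ∀ p ∈ W, R < ‖p.2 - p.1‖ →
      ‖(‖p.2 - p.1‖⁻¹ • (p.2 - p.1)) - v‖ < δ) :
    ∀ (n : ℕ) (ε : ℝ), 0 < ε → ∃ M : ℝ, 0 < M ∧ ∀ p ∈ W, M < ‖p.1 - p.2‖ →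
      (1 - ε) * |μ| ^ n * ‖p.2 - p.1‖ ≤ ‖(A ^ n) p.1 - (A ^ n) p.2‖ ∧
      ‖(A ^ n) p.1 - (A ^ n) p.2‖ ≤ (1 + ε) * |μ| ^ n * ‖p.2 - p.1‖ := by
  intro n ε hε
  have hμpos : (0:ℝ) < |μ| ^ n := pow_pos (lt_trans one_pos hμ) n
  have heign : (A ^ n) v = μ ^ n • v := by
    clear hμpos
    induction n with
    | zero => simp
    | succ k ih =>
      rw [pow_succ, ContinuousLinearMap.mul_apply, heig, map_smul, ih, smul_smul,
        mul_comm, ← pow_succ]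
  set C : ℝ := ‖(A ^ n : EuclideanSpace ℝ (Fin d) →L[ℝ] EuclideanSpace ℝ (Fin d))‖ with hC
  have hCnn : 0 ≤ C := norm_nonneg _
  have hδ : 0 < ε * |μ| ^ n / (C + 1) := by positivity
  obtain ⟨R, hR⟩ := hconv _ hδ
  refine ⟨max R 1, lt_of_lt_of_le one_pos (le_max_right _ _), ?_⟩
  intro p hp hM
  obtain ⟨x, y⟩ := p
  simp only at *
  have hyx : y ≠ x := hne (x, y) hp
  have hr : 0 < ‖y - x‖ := by
    rw [norm_pos_iff]
    exact sub_ne_zero.mpr hyx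
  have hM' : max R 1 < ‖y - x‖ := by rwa [norm_sub_rev] at hM
  have hRlt : R < ‖y - x‖ := lt_of_le_of_lt (le_max_left _ _) hM'
  have hclose := hR (x, y) hp hRlt
  simp only at hclose
  set u : EuclideanSpace ℝ (Fin d) := ‖y - x‖⁻¹ • (y - x) with hu
  -- bound on ‖(A^n) u - μ^n • v‖
  have hkey : ‖(A ^ n) u - μ ^ n • v‖ ≤ ε * |μ| ^ n := by
    have h1 : (A ^ n) u - μ ^ n • v = (A ^ n) (u - v) := by
      rw [map_sub, heign]
    rw [h1]
    calc ‖(A ^ n) (u - v)‖ ≤ C * ‖u - v‖ := (A ^ n).le_opNorm _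
      _ ≤ C * (ε * |μ| ^ n / (C + 1)) := by
          exact mul_le_mul_of_nonneg_left hclose.le hCnn
      _ ≤ ε * |μ| ^ n := by
          rw [div_eq_mul_inv]
          have : C * (ε * |μ| ^ n * (C + 1)⁻¹) = ε * |μ| ^ n * (C * (C + 1)⁻¹) := by ring
          rw [this]
          have h2 : C * (C + 1)⁻¹ ≤ 1 := by
            rw [← div_eq_mul_inv, div_le_one (by linarith : (0:ℝ) < C + 1)]
            linarith
          nlinarith [mul_pos hε hμpos]
  have hnv : ‖(μ : ℝ) ^ n • v‖ = |μ| ^ n := by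
    rw [norm_smul, hv, mul_one, Real.norm_eq_abs, abs_pow]
  -- norms of A^n u
  have hlow : (1 - ε) * |μ| ^ n ≤ ‖(A ^ n) u‖ := by
    have := norm_sub_norm_le ((μ:ℝ) ^ n • v) ((A ^ n) u)
    rw [hnv, norm_sub_rev] at this
    nlinarith
  have hhigh : ‖(A ^ n) u‖ ≤ (1 + ε) * |μ| ^ n := by
    have := norm_sub_norm_le ((A ^ n) u) ((μ:ℝ) ^ n • v)
    rw [hnv] at this
    nlinarith
  -- scale back
  have hxy : x - y = (-‖y - x‖) • u := by
    rw [hu, smul_smul]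
    rw [show -‖y - x‖ * ‖y - x‖⁻¹ = -(‖y - x‖ * ‖y - x‖⁻¹) by ring,
      mul_inv_cancel₀ (ne_of_gt hr)]
    simp
  have himg : ‖(A ^ n) x - (A ^ n) y‖ = ‖y - x‖ * ‖(A ^ n) u‖ := by
    rw [← map_sub, hxy, map_smul, norm_smul]
    simp [abs_of_pos hr]
  constructor
  · rw [himg, mul_comm (‖y - x‖)]
    exact mul_le_mul_of_nonneg_right hlow hr.le
  · rw [himg, mul_comm (‖y - x‖)]
    exact mul_le_mul_of_nonneg_right hhigh hr.le
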